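/- Let c > 0, a ∈ ℝ, inf ζ > 0, sup ζ < ∞, E[ε⁴] < ∞, and assume P({Xⱼ ≤ a} ∩ {X̃ⱼ ≤ a}) ≥ c and P({Xⱼ ≤ a} ∩ {X̃ⱼ > a}) ≥ c for every j ∈ {1,...,p}. Then with μⱼ(a) = E[(𝟙{Xⱼ≤a} − 𝟙{X̃ⱼ≤a})(ζ(X_{S*})ε)²] and σⱼ²(a) = E[((ζ(X_{S*})ε)²(𝟙{Xⱼ≤a} − 𝟙{X̃ⱼ≤a}) − μⱼ(a))²], one has min_{1≤j≤p} σⱼ²(a) ≥ min{ (c/2)·(inf ζ)⁴·E[ε⁴], c³·(inf ζ)⁸·(E[ε⁴])² / (16·(sup ζ)⁴·(E[ε²])²) } > 0. -/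

import Mathlib

open MeasureTheory ProbabilityTheory

set_option maxHeartbeats 1000000

lemma aux_variance_lb {Ω : Type} [MeasurableSpace Ω] (μ : Measure Ω) [IsProbabilityMeasure μ]
    (e Z D : Ω → ℝ) (he : Measurable e) (hZm : Measurable Z) (hDm : Measurable D)
    (ζ₀ ζ₁ : ℝ) (hζ₀ : 0 < ζ₀) (hζ₁ : 0 < ζ₁)
    (hZlb : ∀ ω, ζ₀ ≤ Z ω) (hZub : ∀ ω, Z ω ≤ ζ₁)
    (hD1 : ∀ ω, |D ω| ≤ 1)
    (B C : Set Ω) (hB : MeasurableSet B) (hC : MeasurableSet C)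
    (hDB : ∀ ω ∈ B, D ω = 1) (hDC : ∀ ω ∈ C, D ω = 0)
    (hindep : IndepFun (fun ω => (e ω) ^ 4) (B.indicator (fun _ => (1 : ℝ))) μ)
    (he4 : Integrable (fun ω => (e ω) ^ 4) μ)
    (he2pos : 0 < ∫ ω, (e ω) ^ 2 ∂μ)
    (c : ℝ) (hc : 0 < c)
    (hcB : c ≤ (μ B).toReal) (hcC : c ≤ (μ C).toReal) :
    min (c / 2 * ζ₀ ^ 4 * ∫ ω, (e ω) ^ 4 ∂μ)
        (c ^ 3 * ζ₀ ^ 8 * (∫ ω, (e ω) ^ 4 ∂μ) ^ 2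
          / (16 * ζ₁ ^ 4 * (∫ ω, (e ω) ^ 2 ∂μ) ^ 2))
      ≤ ∫ ω, ((Z ω * e ω) ^ 2 * D ω - ∫ ω', D ω' * (Z ω' * e ω') ^ 2 ∂μ) ^ 2 ∂μ
    ∧ 0 < min (c / 2 * ζ₀ ^ 4 * ∫ ω, (e ω) ^ 4 ∂μ)
        (c ^ 3 * ζ₀ ^ 8 * (∫ ω, (e ω) ^ 4 ∂μ) ^ 2
          / (16 * ζ₁ ^ 4 * (∫ ω, (e ω) ^ 2 ∂μ) ^ 2)) := by
  set I4 := ∫ ω, (e ω) ^ 4 ∂μ with hI4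
  set I2 := ∫ ω, (e ω) ^ 2 ∂μ with hI2
  -- basic integrability
  have he4nn : ∀ ω, (0:ℝ) ≤ (e ω) ^ 4 := fun ω => by positivity
  have hI4nn : 0 ≤ I4 := integral_nonneg he4nn
  have he2m : Measurable (fun ω => (e ω) ^ 2) := he.pow_const 2
  have he2int : Integrable (fun ω => (e ω) ^ 2) μ := by
    have hg : Integrable (fun ω => (e ω) ^ 4 + 1) μ := he4.add (integrable_const 1)
    refine hg.mono' he2m.aestronglyMeasurable ?_
    filter_upwards with ω
    rw [Real.norm_eq_abs, abs_of_nonneg (by positivity)]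
    nlinarith [sq_nonneg ((e ω) ^ 2 - 1)]
  -- I2^2 ≤ I4, hence 0 < I4
  have hI4pos : 0 < I4 := by
    have hpt : ∀ ω, (e ω) ^ 2 ≤ 1 / (2 * I2) * (e ω) ^ 4 + I2 / 2 := by
      intro ω
      have key : 1 / (2 * I2) * (e ω) ^ 4 + I2 / 2 - (e ω) ^ 2
          = 1 / (2 * I2) * ((e ω) ^ 2 - I2) ^ 2 := by
        field_simp; ring
      nlinarith [mul_nonneg (le_of_lt (by positivity : (0:ℝ) < 1 / (2 * I2)))
        (sq_nonneg ((e ω) ^ 2 - I2))]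
    have hg' : Integrable (fun ω => 1 / (2 * I2) * (e ω) ^ 4 + I2 / 2) μ :=
      (he4.const_mul _).add (integrable_const _)
    have hmono := integral_mono he2int hg' hpt
    rw [integral_add (he4.const_mul _) (integrable_const _), integral_const_mul,
      integral_const, probReal_univ, smul_eq_mul, one_mul] at hmono
    have h8 : I2 / 2 ≤ 1 / (2 * I2) * I4 := by linarith
    have h9 : I2 / 2 * (2 * I2) ≤ 1 / (2 * I2) * I4 * (2 * I2) :=
      mul_le_mul_of_nonneg_right h8 (by positivity)
    have h10 : 1 / (2 * I2) * I4 * (2 * I2) = I4 := by field_simp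
    nlinarith
  -- the functions
  set W : Ω → ℝ := fun ω => (Z ω * e ω) ^ 2 with hW
  have hWm : Measurable W := (hZm.mul he).pow_const 2
  have hZ0nn : ∀ ω, (0:ℝ) ≤ Z ω := fun ω => le_trans hζ₀.le (hZlb ω)
  have hZ4 : ∀ ω, ζ₀ ^ 4 ≤ (Z ω) ^ 4 ∧ (Z ω) ^ 4 ≤ ζ₁ ^ 4 := fun ω =>
    ⟨pow_le_pow_left₀ hζ₀.le (hZlb ω) 4, pow_le_pow_left₀ (hZ0nn ω) (hZub ω) 4⟩
  have hD2 : ∀ ω, (D ω) ^ 2 ≤ 1 := by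
    intro ω
    have := hD1 ω
    nlinarith [abs_nonneg (D ω), sq_abs (D ω)]
  -- integrability of D * W
  have hDWint : Integrable (fun ω => D ω * W ω) μ := by
    refine (he2int.const_mul (ζ₁ ^ 2)).mono' (hDm.mul hWm).aestronglyMeasurable ?_
    filter_upwards with ω
    rw [Real.norm_eq_abs, abs_mul, hW]
    have h1 : |(Z ω * e ω) ^ 2| = (Z ω) ^ 2 * (e ω) ^ 2 := by
      rw [abs_of_nonneg (by positivity)]; ring
    rw [h1]
    have hz2 : (Z ω) ^ 2 ≤ ζ₁ ^ 2 := pow_le_pow_left₀ (hZ0nn ω) (hZub ω) 2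
    have := hD1 ω
    nlinarith [sq_nonneg (e ω), sq_nonneg (Z ω), abs_nonneg (D ω)]
  set m := ∫ ω', D ω' * W ω' ∂μ with hm
  -- integrability of (W*D)^2
  have hWDsqint : Integrable (fun ω => (W ω * D ω) ^ 2) μ := by
    refine (he4.const_mul (ζ₁ ^ 4)).mono'
      ((hWm.mul hDm).pow_const 2).aestronglyMeasurable ?_
    filter_upwards with ω
    rw [Real.norm_eq_abs, abs_of_nonneg (by positivity)]
    have h1 := (hZ4 ω).2
    have h2 := hD2 ω
    have h3 : (W ω * D ω) ^ 2 = (Z ω) ^ 4 * (e ω) ^ 4 * (D ω) ^ 2 := by rw [hW]; ring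
    nlinarith [he4nn ω, sq_nonneg (D ω), (hZ4 ω).1,
      mul_nonneg (pow_nonneg (hZ0nn ω) 4) (he4nn ω)]
  have hWDint : Integrable (fun ω => W ω * D ω) μ := by
    have h : (fun ω => W ω * D ω) = fun ω => D ω * W ω := by funext ω; ring
    rw [h]; exact hDWint
  -- V = Q - m^2
  have hsubint : Integrable (fun ω => (W ω * D ω) ^ 2 - 2 * m * (W ω * D ω)) μ :=
    hWDsqint.sub (hWDint.const_mul _)
  have hVint : Integrable (fun ω => (W ω * D ω - m) ^ 2) μ := by
    have h : (fun ω => (W ω * D ω - m) ^ 2)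
        = fun ω => ((W ω * D ω) ^ 2 - 2 * m * (W ω * D ω)) + m ^ 2 := by
      funext ω; ring
    rw [h]
    exact hsubint.add (integrable_const _)
  set Q := ∫ ω, (W ω * D ω) ^ 2 ∂μ with hQ
  set V := ∫ ω, (W ω * D ω - m) ^ 2 ∂μ with hV
  have hVeq : V = Q - m ^ 2 := by
    have h1 : (fun ω => (W ω * D ω - m) ^ 2)
        = fun ω => ((W ω * D ω) ^ 2 - 2 * m * (W ω * D ω)) + m ^ 2 := by
      funext ω; ring
    have h2 : ∫ ω, W ω * D ω ∂μ = m := by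
      rw [hm]; congr 1; funext ω; ring
    rw [hV, h1, integral_add hsubint (integrable_const _),
      integral_sub hWDsqint (hWDint.const_mul _), integral_const_mul, h2,
      integral_const, probReal_univ, smul_eq_mul, one_mul]
    ring
  -- Q ≥ c * ζ₀^4 * I4 via independence
  have hBint : Integrable (B.indicator (fun _ => (1:ℝ))) μ := by
    refine (integrable_const (1:ℝ)).mono'
      (measurable_const.indicator hB).aestronglyMeasurable ?_
    filter_upwards with ω
    rw [Real.norm_eq_abs]
    by_cases h : ω ∈ B <;> simp [Set.indicator, h]
  have hBtoReal : ∫ ω, B.indicator (fun _ => (1:ℝ)) ω ∂μ = (μ B).toReal := by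
    rw [integral_indicator_const (1:ℝ) hB, smul_eq_mul, mul_one]
    rfl
  have hQlb : c * (ζ₀ ^ 4 * I4) ≤ Q := by
    have hpt : ∀ ω, ζ₀ ^ 4 * ((e ω) ^ 4 * B.indicator (fun _ => (1:ℝ)) ω)
        ≤ (W ω * D ω) ^ 2 := by
      intro ω
      by_cases h : ω ∈ B
      · rw [Set.indicator_of_mem h, hDB ω h]
        have h1 := (hZ4 ω).1
        have h2 : (W ω * 1) ^ 2 = (Z ω) ^ 4 * (e ω) ^ 4 := by rw [hW]; ring
        rw [h2, mul_one]
        exact mul_le_mul_of_nonneg_right h1 (he4nn ω)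
      · rw [Set.indicator_of_notMem h]
        have h0 : ζ₀ ^ 4 * ((e ω) ^ 4 * 0) = 0 := by ring
        rw [h0]
        positivity
    have hint1 : Integrable (fun ω => (e ω) ^ 4 * B.indicator (fun _ => (1:ℝ)) ω) μ := by
      refine he4.mono' (he4.1.mul hBint.1) ?_
      filter_upwards with ω
      rw [Real.norm_eq_abs, abs_mul, abs_of_nonneg (he4nn ω)]
      by_cases h : ω ∈ B <;> simp [Set.indicator, h, he4nn ω]
    have hlhs : Integrable (fun ω => ζ₀ ^ 4 * ((e ω) ^ 4 * B.indicator (fun _ => (1:ℝ)) ω)) μ :=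
      hint1.const_mul _
    have hmono := integral_mono hlhs hWDsqint hpt
    rw [integral_const_mul] at hmono
    have hprod : ∫ ω, (e ω) ^ 4 * B.indicator (fun _ => (1:ℝ)) ω ∂μ
        = I4 * (μ B).toReal := by
      have h := hindep.integral_mul_eq_mul_integral he4.1 hBint.1
      rw [← hBtoReal, ← h]
      rfl
    rw [hprod] at hmono
    calc c * (ζ₀ ^ 4 * I4) ≤ (μ B).toReal * (ζ₀ ^ 4 * I4) :=
          mul_le_mul_of_nonneg_right hcB (by positivity)
      _ = ζ₀ ^ 4 * (I4 * (μ B).toReal) := by ring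
      _ ≤ Q := hmono
  -- V ≥ c * m^2
  have hVlb2 : c * m ^ 2 ≤ V := by
    have hpt : ∀ ω, C.indicator (fun _ => m ^ 2) ω ≤ (W ω * D ω - m) ^ 2 := by
      intro ω
      by_cases h : ω ∈ C
      · rw [Set.indicator_of_mem h, hDC ω h]
        have : (W ω * 0 - m) ^ 2 = m ^ 2 := by ring
        rw [this]
      · rw [Set.indicator_of_notMem h]; positivity
    have hCint : Integrable (C.indicator (fun _ => m ^ 2)) μ := by
      refine (integrable_const (m ^ 2)).mono'
        (measurable_const.indicator hC).aestronglyMeasurable ?_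
      filter_upwards with ω
      rw [Real.norm_eq_abs]
      by_cases h : ω ∈ C
      · rw [Set.indicator_of_mem h]
        exact le_of_eq (abs_of_nonneg (sq_nonneg m))
      · rw [Set.indicator_of_notMem h, abs_zero]; positivity
    have hmono := integral_mono hCint hVint hpt
    rw [integral_indicator_const (m ^ 2) hC, smul_eq_mul] at hmono
    calc c * m ^ 2 ≤ (μ C).toReal * m ^ 2 :=
          mul_le_mul_of_nonneg_right hcC (sq_nonneg m)
      _ ≤ V := hmono
  -- m^2 ≤ ζ₁^4 * I2^2
  have hmub : m ^ 2 ≤ ζ₁ ^ 4 * I2 ^ 2 := by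
    have h2 : ‖m‖ ≤ ∫ ω, ‖D ω * W ω‖ ∂μ := norm_integral_le_integral_norm _
    have h3 : ∀ ω, ‖D ω * W ω‖ ≤ ζ₁ ^ 2 * (e ω) ^ 2 := by
      intro ω
      have h1 : |W ω| = (Z ω) ^ 2 * (e ω) ^ 2 := by
        simp only [hW]
        rw [abs_of_nonneg (by positivity : (0:ℝ) ≤ (Z ω * e ω) ^ 2)]
        ring
      rw [Real.norm_eq_abs, abs_mul, h1]
      have hz2 : (Z ω) ^ 2 ≤ ζ₁ ^ 2 := pow_le_pow_left₀ (hZ0nn ω) (hZub ω) 2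
      calc |D ω| * ((Z ω) ^ 2 * (e ω) ^ 2)
          ≤ 1 * ((Z ω) ^ 2 * (e ω) ^ 2) :=
            mul_le_mul_of_nonneg_right (hD1 ω) (by positivity)
        _ = (Z ω) ^ 2 * (e ω) ^ 2 := one_mul _
        _ ≤ ζ₁ ^ 2 * (e ω) ^ 2 := mul_le_mul_of_nonneg_right hz2 (sq_nonneg _)
    have hmono := integral_mono hDWint.norm (he2int.const_mul (ζ₁ ^ 2)) h3
    rw [integral_const_mul] at hmono
    have h1 : |m| ≤ ζ₁ ^ 2 * I2 := by
      rw [← Real.norm_eq_abs]; exact h2.trans hmono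
    calc m ^ 2 = |m| ^ 2 := (sq_abs m).symm
      _ ≤ (ζ₁ ^ 2 * I2) ^ 2 := pow_le_pow_left₀ (abs_nonneg m) h1 2
      _ = ζ₁ ^ 4 * I2 ^ 2 := by ring
  -- final arithmetic
  clear_value I4 I2 m Q V
  have hT1pos : 0 < c / 2 * ζ₀ ^ 4 * I4 := by positivity
  have hT2pos : 0 < c ^ 3 * ζ₀ ^ 8 * I4 ^ 2 / (16 * ζ₁ ^ 4 * I2 ^ 2) := by positivity
  refine ⟨?_, lt_min hT1pos hT2pos⟩
  by_cases hcase : m ^ 2 ≤ c / 2 * ζ₀ ^ 4 * I4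
  · refine le_trans (min_le_left _ _) ?_
    rw [hVeq]
    linarith [hQlb]
  · refine le_trans (min_le_right _ _) ?_
    push_neg at hcase
    have hK : 0 < ζ₁ ^ 4 * I2 ^ 2 := by positivity
    have h5 : c * ζ₀ ^ 4 * I4 ≤ 2 * (ζ₁ ^ 4 * I2 ^ 2) := by
      have := lt_of_lt_of_le hcase hmub
      linarith
    have hu : (0:ℝ) ≤ c * ζ₀ ^ 4 * I4 := by positivity
    have h6 : c ^ 3 * ζ₀ ^ 8 * I4 ^ 2 / (16 * ζ₁ ^ 4 * I2 ^ 2) ≤ c * (c / 2 * ζ₀ ^ 4 * I4) := by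
      rw [div_le_iff₀ (by positivity)]
      nlinarith [mul_le_mul_of_nonneg_left h5 (mul_nonneg hc.le hu),
        mul_nonneg (mul_nonneg hc.le hu) hK.le]
    have h7 : c * (c / 2 * ζ₀ ^ 4 * I4) ≤ c * m ^ 2 := by nlinarith
    exact h6.trans (h7.trans hVlb2)
theorem uniform_variance_lower_bound
    {Ω : Type} [MeasurableSpace Ω] (μ : Measure Ω) [IsProbabilityMeasure μ] {p : ℕ}
    (X Xk : Ω → Fin p → ℝ) (ε : Ω → ℝ)
    (S : Finset (Fin p))
    (ζ : ({ i : Fin p // i ∈ S } → ℝ) → ℝ)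
    (hX : Measurable X) (hXk : Measurable Xk) (hε : Measurable ε) (hζ : Measurable ζ)
    (ζ₀ ζ₁ : ℝ) (hζ₀ : 0 < ζ₀) (hζlb : ∀ z, ζ₀ ≤ ζ z) (hζub : ∀ z, ζ z ≤ ζ₁)
    (hεindep : IndepFun ε (fun ω => (X ω, Xk ω)) μ)
    (hε4 : Integrable (fun ω => (ε ω) ^ 4) μ)
    (hε2pos : 0 < ∫ ω, (ε ω) ^ 2 ∂μ)
    (a c : ℝ) (hc : 0 < c)
    (hprob1 : ∀ j : Fin p, ENNReal.ofReal c ≤ μ {ω | X ω j ≤ a ∧ Xk ω j ≤ a})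
    (hprob2 : ∀ j : Fin p, ENNReal.ofReal c ≤ μ {ω | X ω j ≤ a ∧ a < Xk ω j}) :
    ∀ j : Fin p,
      min (c / 2 * ζ₀ ^ 4 * ∫ ω, (ε ω) ^ 4 ∂μ)
          (c ^ 3 * ζ₀ ^ 8 * (∫ ω, (ε ω) ^ 4 ∂μ) ^ 2
            / (16 * ζ₁ ^ 4 * (∫ ω, (ε ω) ^ 2 ∂μ) ^ 2))
        ≤ ∫ ω, ((ζ (fun i => X ω i.1) * ε ω) ^ 2 *
              ((if X ω j ≤ a then (1 : ℝ) else 0) - (if Xk ω j ≤ a then (1 : ℝ) else 0))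
            - ∫ ω', ((if X ω' j ≤ a then (1 : ℝ) else 0)
                      - (if Xk ω' j ≤ a then (1 : ℝ) else 0))
                * (ζ (fun i => X ω' i.1) * ε ω') ^ 2 ∂μ) ^ 2 ∂μ
      ∧ 0 < min (c / 2 * ζ₀ ^ 4 * ∫ ω, (ε ω) ^ 4 ∂μ)
          (c ^ 3 * ζ₀ ^ 8 * (∫ ω, (ε ω) ^ 4 ∂μ) ^ 2
            / (16 * ζ₁ ^ 4 * (∫ ω, (ε ω) ^ 2 ∂μ) ^ 2)) := by
  intro j
  have hXj : Measurable (fun ω => X ω j) := (measurable_pi_apply j).comp hX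
  have hXkj : Measurable (fun ω => Xk ω j) := (measurable_pi_apply j).comp hXk
  have hζ₁ : 0 < ζ₁ := hζ₀.trans_le ((hζlb (fun _ => 0)).trans (hζub _))
  have hZfm : Measurable (fun ω => ζ (fun i : { i : Fin p // i ∈ S } => X ω i.1)) :=
    hζ.comp (measurable_pi_lambda _ (fun i => (measurable_pi_apply i.1).comp hX))
  have hsA : MeasurableSet {ω | X ω j ≤ a} := measurableSet_le hXj measurable_const
  have hsAk : MeasurableSet {ω | Xk ω j ≤ a} := measurableSet_le hXkj measurable_const
  have hsAk' : MeasurableSet {ω | a < Xk ω j} := measurableSet_lt measurable_const hXkj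
  have hDfm : Measurable (fun ω => (if X ω j ≤ a then (1:ℝ) else 0)
      - (if Xk ω j ≤ a then (1:ℝ) else 0)) :=
    (Measurable.ite hsA measurable_const measurable_const).sub
      (Measurable.ite hsAk measurable_const measurable_const)
  set B : Set Ω := {ω | X ω j ≤ a ∧ a < Xk ω j} with hBdef
  set C : Set Ω := {ω | X ω j ≤ a ∧ Xk ω j ≤ a} with hCdef
  have hB : MeasurableSet B := hsA.inter hsAk'
  have hC : MeasurableSet C := hsA.inter hsAk
  have hDB : ∀ ω ∈ B, (if X ω j ≤ a then (1:ℝ) else 0)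
      - (if Xk ω j ≤ a then (1:ℝ) else 0) = 1 := by
    intro ω h
    rw [if_pos h.1, if_neg (not_le.mpr h.2)]
    norm_num
  have hDC : ∀ ω ∈ C, (if X ω j ≤ a then (1:ℝ) else 0)
      - (if Xk ω j ≤ a then (1:ℝ) else 0) = 0 := by
    intro ω h
    rw [if_pos h.1, if_pos h.2]
    norm_num
  have hD1 : ∀ ω, |(if X ω j ≤ a then (1:ℝ) else 0)
      - (if Xk ω j ≤ a then (1:ℝ) else 0)| ≤ 1 := by
    intro ω
    by_cases h1 : X ω j ≤ a <;> by_cases h2 : Xk ω j ≤ a <;> simp [h1, h2]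
  -- independence
  have hindep' : IndepFun (fun ω => (ε ω) ^ 4) (B.indicator (fun _ => (1:ℝ))) μ := by
    set Sq : Set ((Fin p → ℝ) × (Fin p → ℝ)) := {q | q.1 j ≤ a ∧ a < q.2 j} with hSq
    have hSqm : MeasurableSet Sq :=
      (measurableSet_le ((measurable_pi_apply j).comp measurable_fst) measurable_const).inter
        (measurableSet_lt measurable_const ((measurable_pi_apply j).comp measurable_snd))
    have hψ : Measurable (Sq.indicator (fun _ => (1:ℝ))) :=
      measurable_const.indicator hSqm
    have h := hεindep.comp (measurable_id.pow_const 4) hψ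
    have hcomp : (Sq.indicator (fun _ => (1:ℝ))) ∘ (fun ω => (X ω, Xk ω))
        = B.indicator (fun _ => (1:ℝ)) := by
      funext ω
      by_cases hmem : X ω j ≤ a ∧ a < Xk ω j
      · rw [Function.comp_apply,
          Set.indicator_of_mem (show (X ω, Xk ω) ∈ Sq from hmem),
          Set.indicator_of_mem (show ω ∈ B from hmem)]
      · rw [Function.comp_apply,
          Set.indicator_of_notMem (show (X ω, Xk ω) ∉ Sq from hmem),
          Set.indicator_of_notMem (show ω ∉ B from hmem)]
    rw [hcomp] at h
    exact h
  have hcB : c ≤ (μ B).toReal := by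
    calc c = (ENNReal.ofReal c).toReal := (ENNReal.toReal_ofReal hc.le).symm
      _ ≤ (μ B).toReal := ENNReal.toReal_mono (measure_ne_top μ B) (hprob2 j)
  have hcC : c ≤ (μ C).toReal := by
    calc c = (ENNReal.ofReal c).toReal := (ENNReal.toReal_ofReal hc.le).symm
      _ ≤ (μ C).toReal := ENNReal.toReal_mono (measure_ne_top μ C) (hprob1 j)
  exact aux_variance_lb μ ε (fun ω => ζ (fun i => X ω i.1))
    (fun ω => (if X ω j ≤ a then (1:ℝ) else 0) - (if Xk ω j ≤ a then (1:ℝ) else 0))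
    hε hZfm hDfm ζ₀ ζ₁ hζ₀ hζ₁ (fun ω => hζlb _) (fun ω => hζub _) hD1
    B C hB hC hDB hDC hindep' hε4 hε2pos c hc hcB hcC
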